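/- Let A be a simple k-algebra and B a central simple k-algebra over a field k. For any two k-algebra homomorphisms f, g : A → B, there exists a unit b ∈ B× such that f(x) = b * g(x) * b⁻¹ for all x ∈ A. -/

import Mathlib

open Module

lemma SN.submodule_eq_top {R : Type*} [Ring R] [IsSimpleRing R] (T : Submodule R R)
    (hmul : ∀ x ∈ T, ∀ b : R, x * b ∈ T) (hne : T ≠ ⊥) : T = ⊤ := by
  let t : TwoSidedIdeal R := TwoSidedIdeal.mk' (T : Set R) T.zero_mem
    (fun ha hb => T.add_mem ha hb) (fun ha => T.neg_mem ha)
    (fun {a b} hb => T.smul_mem a hb) (fun {a b} ha => hmul _ ha _)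
  have ht : ∀ x : R, x ∈ t ↔ x ∈ T := fun x => TwoSidedIdeal.mem_mk' _ _ _ _ _ _ x
  rcases IsSimpleRing.simple.eq_bot_or_eq_top t with h | h
  · exfalso; apply hne
    ext x
    simp only [Submodule.mem_bot]
    constructor
    · intro hx
      have : x ∈ t := (ht x).2 hx
      rw [h] at this
      exact (TwoSidedIdeal.mem_bot R).1 this
    · rintro rfl; exact T.zero_mem
  · have h1 : (1 : R) ∈ T := (ht 1).1 (h ▸ TwoSidedIdeal.mem_top R)
    rw [Submodule.eq_top_iff']
    intro x
    simpa using T.smul_mem x h1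

/-- A simple artinian ring is semisimple. -/
lemma SN.isSemisimpleRing {R : Type*} [Ring R] [IsSimpleRing R] [IsArtinian R R] :
    IsSemisimpleRing R := by
  apply IsSemisimpleModule.of_sSup_simples_eq_top
  set T : Submodule R R := sSup {m : Submodule R R | IsSimpleModule R m} with hT
  have hmul : ∀ x ∈ T, ∀ b : R, x * b ∈ T := by
    intro x hx b
    have hle : T ≤ T.comap (LinearMap.toSpanSingleton R R b) := by
      conv_lhs => rw [hT]
      apply sSup_le
      intro m hm
      rw [← Submodule.map_le_iff_le_comap]
      have hrange : m.map (LinearMap.toSpanSingleton R R b)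
          = LinearMap.range ((LinearMap.toSpanSingleton R R b).comp m.subtype) := by
        rw [LinearMap.range_comp, Submodule.range_subtype]
      haveI : IsSimpleModule R m := hm
      rcases LinearMap.injective_or_eq_zero ((LinearMap.toSpanSingleton R R b).comp m.subtype)
        with h | h
      · have hs : IsSimpleModule R (m.map (LinearMap.toSpanSingleton R R b)) := by
          rw [hrange]
          exact IsSimpleModule.congr (LinearEquiv.ofInjective _ h).symm
        rw [hT]
        exact le_sSup hs
      · rw [hrange, h, LinearMap.range_zero]
        exact bot_le
    simpa [LinearMap.toSpanSingleton_apply, smul_eq_mul] using hle hx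
  apply SN.submodule_eq_top T hmul
  have : Nontrivial R := inferInstance
  haveI : IsAtomic (Submodule R R) := inferInstance
  obtain ⟨m, hm⟩ := IsAtomic.exists_atom (Submodule R R)
  intro hbot
  have hle : m ≤ T := le_sSup (isSimpleModule_iff_isAtom.mpr hm)
  rw [hbot, le_bot_iff] at hle
  exact hm.1 hle

/-- Over a simple ring, any simple left ideal is isomorphic to any simple module. -/
lemma SN.simple_iso {R : Type*} [Ring R] [IsSimpleRing R]
    (I : Submodule R R) [IsSimpleModule R I] (S : Type*) [AddCommGroup S] [Module R S]
    [IsSimpleModule R S] : Nonempty (I ≃ₗ[R] S) := by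
  -- the annihilator-type argument: ∃ c : S, the map x ↦ x • c is nonzero on I
  have hex : ∃ c : S, ∃ x : I, (x : R) • c ≠ 0 := by
    by_contra h
    push_neg at h
    -- then I ⊆ Ann S, a two-sided ideal, nonzero, hence contains 1, so S = 0
    set T : Submodule R R :=
      { carrier := {r : R | ∀ s : S, r • s = 0}
        add_mem' := by intro a b ha hb s; rw [add_smul, ha, hb, add_zero]
        zero_mem' := by intro s; rw [zero_smul]
        smul_mem' := by intro a r hr s; rw [smul_eq_mul, mul_smul, hr, smul_zero] } with hTdef
    have hmul : ∀ x ∈ T, ∀ b : R, x * b ∈ T := by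
      intro x hx b s
      rw [mul_smul]
      exact hx _
    have hne : T ≠ ⊥ := by
      intro hbot
      haveI : Nontrivial I := IsSimpleModule.nontrivial R I
      obtain ⟨⟨x, hxI⟩, hx0⟩ := exists_ne (0 : I)
      have hxT : x ∈ T := fun s => h s ⟨x, hxI⟩
      rw [hbot, Submodule.mem_bot] at hxT
      exact hx0 (by ext; exact hxT)
    have htop := SN.submodule_eq_top T hmul hne
    have h1 : (1 : R) ∈ T := htop ▸ Submodule.mem_top
    haveI : Nontrivial S := IsSimpleModule.nontrivial R S
    obtain ⟨s, hs⟩ := exists_ne (0 : S)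
    exact hs (by simpa using h1 s)
  obtain ⟨c, x, hxc⟩ := hex
  let φ : I →ₗ[R] S :=
    { toFun := fun y => (y : R) • c
      map_add' := fun a b => by simp [add_smul]
      map_smul' := fun r a => by simp [mul_smul] }
  have hφ : φ ≠ 0 := by
    intro h0
    exact hxc (by simpa [φ] using congrFun (congrArg DFunLike.coe h0) x)
  exact ⟨LinearEquiv.ofBijective φ (LinearMap.bijective_of_ne_zero hφ)⟩
open Module

open DirectSum in
lemma SN.decomp (k : Type*) [Field k] (R : Type*) [Ring R] [Algebra k R]
    [IsSimpleRing R] [FiniteDimensional k R]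
    (M : Type*) [AddCommGroup M] [Module k M] [Module R M] [IsScalarTower k R M]
    [FiniteDimensional k M] (Satom : Submodule R R) [IsSimpleModule R Satom] :
    ∃ n : ℕ, Nonempty (M ≃ₗ[R] (Fin n → Satom)) := by
  classical
  haveI : IsNoetherian R M := isNoetherian_of_tower k inferInstance
  haveI : IsArtinian R R := isArtinian_of_tower k inferInstance
  haveI : IsSemisimpleRing R := SN.isSemisimpleRing
  obtain ⟨s, hind, hsup, hsimple⟩ := IsSemisimpleModule.exists_sSupIndep_sSup_simples_eq_top R M
  haveI hsimple' : ∀ i : s, IsSimpleModule R (i : Submodule R M) := fun i => hsimple i i.2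
  have hindep : iSupIndep ((↑) : s → Submodule R M) := (sSupIndep_iff s).1 hind
  haveI : Finite s := by
    have h := Submodule.finite_ne_bot_of_iSupIndep hindep
    have heq : {i : s | (i : Submodule R M) ≠ ⊥} = Set.univ := by
      ext i
      simp only [Set.mem_setOf_eq, Set.mem_univ, iff_true]
      exact (isSimpleModule_iff_isAtom.mp (hsimple' i)).1
    rw [heq] at h
    exact Set.finite_univ_iff.mp h
  haveI : Fintype s := Fintype.ofFinite _
  have hinternal : DirectSum.IsInternal (fun i : s => (i : Submodule R M)) := by
    rw [DirectSum.isInternal_submodule_iff_iSupIndep_and_iSup_eq_top]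
    exact ⟨hindep, by rw [← sSup_eq_iSup']; exact hsup⟩
  refine ⟨Fintype.card s, ⟨?_⟩⟩
  have e1 : M ≃ₗ[R] (⨁ i : s, ↥(i : Submodule R M)) :=
    (LinearEquiv.ofBijective (DirectSum.coeLinearMap _) hinternal).symm
  have e2 : (⨁ i : s, ↥(i : Submodule R M)) ≃ₗ[R] (∀ i : s, ↥(i : Submodule R M)) :=
    DirectSum.linearEquivFunOnFintype R s _
  have e3 : (∀ i : s, ↥(i : Submodule R M)) ≃ₗ[R] (s → Satom) :=
    LinearEquiv.piCongrRight (fun i => (SN.simple_iso (R := R) Satom ↥(i : Submodule R M)).some.symm)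
  have e4 : (s → Satom) ≃ₗ[R] (Fin (Fintype.card s) → Satom) :=
    LinearEquiv.funCongrLeft R Satom (Fintype.equivFin s).symm
  exact e1.trans (e2.trans (e3.trans e4))


lemma SN.iso_of_finrank_eq (k : Type*) [Field k] (R : Type*) [Ring R] [Algebra k R]
    [IsSimpleRing R] [FiniteDimensional k R]
    (M N : Type*) [AddCommGroup M] [Module k M] [Module R M] [IsScalarTower k R M]
    [FiniteDimensional k M] [AddCommGroup N] [Module k N] [Module R N] [IsScalarTower k R N]
    [FiniteDimensional k N] (h : finrank k M = finrank k N) : Nonempty (M ≃ₗ[R] N) := by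
  haveI : IsArtinian R R := isArtinian_of_tower k inferInstance
  haveI : Nontrivial R := inferInstance
  haveI : IsAtomic (Submodule R R) := inferInstance
  obtain ⟨Satom, hatom⟩ := IsAtomic.exists_atom (Submodule R R)
  haveI : IsSimpleModule R Satom := isSimpleModule_iff_isAtom.mpr hatom
  obtain ⟨n, ⟨eM⟩⟩ := SN.decomp k R M Satom
  obtain ⟨m, ⟨eN⟩⟩ := SN.decomp k R N Satom
  haveI : Nontrivial Satom := IsSimpleModule.nontrivial R Satom
  have hS : 0 < finrank k Satom := finrank_pos
  have hrM : finrank k M = n * finrank k Satom := by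
    rw [(eM.restrictScalars k).finrank_eq, Module.finrank_pi_fintype, Finset.sum_const,
      Finset.card_univ, Fintype.card_fin, smul_eq_mul]
  have hrN : finrank k N = m * finrank k Satom := by
    rw [(eN.restrictScalars k).finrank_eq, Module.finrank_pi_fintype, Finset.sum_const,
      Finset.card_univ, Fintype.card_fin, smul_eq_mul]
  have hnm : n = m := by
    rw [hrM, hrN] at h
    exact Nat.eq_of_mul_eq_mul_right hS h
  subst hnm
  exact ⟨eM.trans eN.symm⟩
open Module TensorProduct

section tensor
variable {k : Type*} [Field k] {A : Type*} [Ring A] [Algebra k A] [FiniteDimensional k A]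
  {C : Type*} [Ring C] [Algebra k C]

private noncomputable def SN.coeff (j : Fin (finrank k A)) : A ⊗[k] C →ₗ[k] C :=
  (TensorProduct.lid k C).toLinearMap ∘ₗ
    (TensorProduct.map ((Module.finBasis k A).coord j) LinearMap.id)

lemma SN.coeff_tmul (j : Fin (finrank k A)) (a : A) (c : C) :
    SN.coeff j (a ⊗ₜ[k] c) = ((Module.finBasis k A).repr a) j • c := by
  simp [SN.coeff, Basis.coord_apply]

lemma SN.sum_coeff (z : A ⊗[k] C) :
    z = ∑ j, (Module.finBasis k A) j ⊗ₜ[k] SN.coeff j z := by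
  induction z using TensorProduct.induction_on with
  | zero => simp
  | tmul a c =>
    conv_lhs => rw [← (Module.finBasis k A).sum_repr a]
    rw [sum_tmul]
    refine Finset.sum_congr rfl fun j _ => ?_
    rw [SN.coeff_tmul]
    exact smul_tmul _ _ _
  | add u v hu hv =>
    conv_lhs => rw [hu, hv]
    rw [← Finset.sum_add_distrib]
    refine Finset.sum_congr rfl fun j _ => ?_
    rw [map_add, tmul_add]

lemma SN.coeff_conj (j : Fin (finrank k A)) (u v : C) (z : A ⊗[k] C) :
    SN.coeff j (((1 : A) ⊗ₜ[k] u) * z * ((1 : A) ⊗ₜ[k] v)) = u * SN.coeff j z * v := by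
  induction z using TensorProduct.induction_on with
  | zero => simp
  | tmul a c =>
    rw [Algebra.TensorProduct.tmul_mul_tmul, Algebra.TensorProduct.tmul_mul_tmul,
      one_mul, mul_one, SN.coeff_tmul, SN.coeff_tmul]
    rw [mul_smul_comm, smul_mul_assoc]
  | add y w hy hw =>
    rw [mul_add, add_mul, map_add, hy, hw, map_add, mul_add, add_mul]

lemma SN.eq_zero_of_coeff (z : A ⊗[k] C) (h : ∀ j, SN.coeff j z = 0) : z = 0 := by
  rw [SN.sum_coeff z]
  simp [h]

end tensor

open Module TensorProduct in
lemma SN.tensor_nontrivial {k : Type*} [Field k] {A : Type*} [Ring A] [Algebra k A]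
    [FiniteDimensional k A] {C : Type*} [Ring C] [Algebra k C] [Nontrivial A] [Nontrivial C] :
    Nontrivial (A ⊗[k] C) := by
  refine ⟨1, 0, fun h => ?_⟩
  obtain ⟨j, hj⟩ : ∃ j, ((Module.finBasis k A).repr 1) j ≠ 0 := by
    by_contra hc
    push_neg at hc
    have h0 : ((Module.finBasis k A).repr 1) = 0 := Finsupp.ext hc
    rw [LinearEquiv.map_eq_zero_iff] at h0
    exact (one_ne_zero : (1 : A) ≠ 0) h0
  have h2 := SN.coeff_tmul (k := k) (C := C) j 1 1
  rw [show (1 : A) ⊗ₜ[k] (1 : C) = (1 : A ⊗[k] C) from rfl, h, map_zero] at h2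
  rw [← Algebra.algebraMap_eq_smul_one] at h2
  exact hj ((algebraMap k C).injective (by rw [← h2, map_zero]))

open Module TensorProduct in
/-- Tensoring a simple algebra with a central simple algebra gives a simple algebra. -/
lemma SN.tensor_simple (k : Type*) [Field k] (A : Type*) [Ring A] [Algebra k A]
    [IsSimpleRing A] [FiniteDimensional k A]
    (C : Type*) [Ring C] [Algebra k C] [IsSimpleRing C] [Algebra.IsCentral k C] :
    IsSimpleRing (A ⊗[k] C) := by
  classical
  haveI : Nontrivial (A ⊗[k] C) := SN.tensor_nontrivial
  set b := Module.finBasis k A with hb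
  apply IsSimpleRing.of_eq_bot_or_eq_top
  intro I
  rw [or_iff_not_imp_left]
  intro hne
  -- there is a nonzero element of I
  have hex : ∃ x, x ∈ I ∧ x ≠ 0 := by
    by_contra hc
    push_neg at hc
    exact hne (by ext x; simp only [TwoSidedIdeal.mem_bot]; exact ⟨fun hx => hc x hx, by rintro rfl; exact I.zero_mem⟩)
  -- support of an element
  set supp : A ⊗[k] C → Finset (Fin (finrank k A)) :=
    fun z => Finset.univ.filter (fun j => SN.coeff j z ≠ 0) with hsupp
  have supp_spec : ∀ z j, j ∈ supp z ↔ SN.coeff j z ≠ 0 := by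
    intro z j; simp [hsupp]
  have hnz : ∀ z : A ⊗[k] C, z ≠ 0 → ∃ j, SN.coeff j z ≠ 0 := by
    intro z hz
    by_contra hc
    push_neg at hc
    exact hz (SN.eq_zero_of_coeff z hc)
  -- minimal support cardinality
  have hNS : ∃ n, ∃ x, x ∈ I ∧ x ≠ 0 ∧ (supp x).card = n :=
    ⟨_, hex.choose, hex.choose_spec.1, hex.choose_spec.2, rfl⟩
  set n₀ := Nat.find hNS with hn₀
  obtain ⟨x, hxI, hx0, hxcard⟩ := Nat.find_spec hNS
  have hmin : ∀ z, z ∈ I → z ≠ 0 → n₀ ≤ (supp z).card := by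
    intro z hzI hz0
    by_contra hc
    push_neg at hc
    exact Nat.find_min hNS hc ⟨z, hzI, hz0, rfl⟩
  obtain ⟨j₀, hj₀⟩ := hnz x hx0
  -- the two-sided ideal of C of j₀-coefficients of elements of I supported in supp x
  set T : Submodule C C :=
    { carrier := {d : C | ∃ z, z ∈ I ∧ (∀ j, SN.coeff j x = 0 → SN.coeff j z = 0) ∧
        SN.coeff j₀ z = d}
      add_mem' := by
        rintro d e ⟨z, hz, hs, rfl⟩ ⟨w, hw, hs', rfl⟩
        exact ⟨z + w, I.add_mem hz hw, fun j hj => by rw [map_add, hs j hj, hs' j hj, add_zero],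
          by rw [map_add]⟩
      zero_mem' := ⟨0, I.zero_mem, fun j _ => map_zero _, map_zero _⟩
      smul_mem' := by
        rintro c d ⟨z, hz, hs, rfl⟩
        refine ⟨((1 : A) ⊗ₜ[k] c) * z * ((1 : A) ⊗ₜ[k] (1 : C)), I.mul_mem_right _ _
          (I.mul_mem_left _ _ hz), fun j hj => ?_, ?_⟩
        · rw [SN.coeff_conj, hs j hj, mul_zero, zero_mul]
        · rw [SN.coeff_conj, mul_one, smul_eq_mul] } with hT
  have hTmul : ∀ d ∈ T, ∀ e : C, d * e ∈ T := by
    rintro d ⟨z, hz, hs, rfl⟩ e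
    refine ⟨((1 : A) ⊗ₜ[k] (1 : C)) * z * ((1 : A) ⊗ₜ[k] e), I.mul_mem_right _ _
      (I.mul_mem_left _ _ hz), fun j hj => ?_, ?_⟩
    · rw [SN.coeff_conj, hs j hj, mul_zero, zero_mul]
    · rw [SN.coeff_conj, one_mul]
  have hTne : T ≠ ⊥ := by
    intro hc
    have : SN.coeff j₀ x ∈ T := ⟨x, hxI, fun j hj => hj, rfl⟩
    rw [hc, Submodule.mem_bot] at this
    exact hj₀ this
  have hTtop := SN.submodule_eq_top T hTmul hTne
  have h1T : (1 : C) ∈ T := hTtop ▸ Submodule.mem_top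
  obtain ⟨x', hx'I, hx'supp, hx'j₀⟩ := h1T
  have hx'0 : x' ≠ 0 := fun hc => one_ne_zero (by rw [← hx'j₀, hc, map_zero])
  -- supp x' = supp x
  have hsub : supp x' ⊆ supp x := by
    intro j hj
    rw [supp_spec] at hj ⊢
    intro hc
    exact hj (hx'supp j hc)
  have hsuppeq : supp x' = supp x :=
    Finset.eq_of_subset_of_card_le hsub (hxcard ▸ hmin x' hx'I hx'0)
  -- commutators vanish
  have hcomm : ∀ c : C, ∀ j, c * SN.coeff j x' = SN.coeff j x' * c := by
    intro c j
    set y := ((1 : A) ⊗ₜ[k] c) * x' * ((1 : A) ⊗ₜ[k] (1 : C)) -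
      ((1 : A) ⊗ₜ[k] (1 : C)) * x' * ((1 : A) ⊗ₜ[k] c) with hy
    have hyI : y ∈ I := I.sub_mem (I.mul_mem_right _ _ (I.mul_mem_left _ _ hx'I))
      (I.mul_mem_right _ _ (I.mul_mem_left _ _ hx'I))
    have hycoeff : ∀ i, SN.coeff i y = c * SN.coeff i x' - SN.coeff i x' * c := by
      intro i
      rw [hy, map_sub, SN.coeff_conj, SN.coeff_conj, mul_one, one_mul]
    have hy0 : y = 0 := by
      by_contra hy0
      have hle : supp y ⊆ (supp x').erase j₀ := by
        intro i hi
        rw [supp_spec] at hi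
        rw [Finset.mem_erase, supp_spec]
        constructor
        · rintro rfl
          rw [hycoeff, hx'j₀, mul_one, one_mul, sub_self] at hi
          exact hi rfl
        · intro hc
          rw [hycoeff, hc, mul_zero, zero_mul, sub_zero] at hi
          exact hi rfl
      have hcard : (supp y).card < n₀ := by
        calc (supp y).card ≤ ((supp x').erase j₀).card := Finset.card_le_card hle
          _ < (supp x').card := Finset.card_erase_lt_of_mem (by
              rw [hsuppeq, supp_spec]; exact hj₀)
          _ = n₀ := by rw [hsuppeq, hxcard]
      exact absurd (hmin y hyI hy0) (not_le.mpr hcard)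
    have h3 := hycoeff j
    rw [hy0, map_zero] at h3
    exact sub_eq_zero.mp h3.symm
  -- each coefficient of x' is central, hence a scalar
  have hscal : ∀ j, ∃ lam : k, algebraMap k C lam = SN.coeff j x' := by
    intro j
    have hc : SN.coeff j x' ∈ Subalgebra.center k C :=
      Subalgebra.mem_center_iff.mpr (fun c => hcomm c j)
    have := Algebra.IsCentral.out (K := k) (D := C) hc
    rwa [Algebra.mem_bot] at this
  choose lam hlam using hscal
  -- x' is a pure tensor a₀ ⊗ 1
  set a₀ : A := ∑ j, lam j • (Module.finBasis k A) j with ha₀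
  have hx'eq : x' = a₀ ⊗ₜ[k] (1 : C) := by
    rw [SN.sum_coeff x', ha₀, sum_tmul]
    refine Finset.sum_congr rfl fun j _ => ?_
    rw [← hlam j, Algebra.algebraMap_eq_smul_one, tmul_smul]
    exact smul_tmul' _ _ _
  have hlamj₀ : lam j₀ = 1 := by
    have := hlam j₀
    rw [hx'j₀] at this
    exact (algebraMap k C).injective (by rw [this, map_one])
  have ha₀ne : a₀ ≠ 0 := by
    intro hc
    have heq : (Module.finBasis k A).equivFun.symm lam = a₀ := by
      rw [Basis.equivFun_symm_apply, ha₀]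
    rw [hc] at heq
    have : lam = 0 := by
      apply (Module.finBasis k A).equivFun.symm.injective
      rw [heq, map_zero]
    rw [this] at hlamj₀
    simp at hlamj₀
  -- the left ideal of A of elements a with a ⊗ 1 ∈ I is two-sided and nonzero
  set J : Submodule A A :=
    { carrier := {a : A | a ⊗ₜ[k] (1 : C) ∈ I}
      add_mem' := by
        intro a b ha hb
        rw [Set.mem_setOf_eq, add_tmul]
        exact I.add_mem ha hb
      zero_mem' := by rw [Set.mem_setOf_eq, zero_tmul]; exact I.zero_mem
      smul_mem' := by
        intro r a ha
        rw [smul_eq_mul, Set.mem_setOf_eq,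
          show (r * a) ⊗ₜ[k] (1 : C) = (r ⊗ₜ[k] (1 : C)) * (a ⊗ₜ[k] (1 : C)) by
            rw [Algebra.TensorProduct.tmul_mul_tmul, one_mul]]
        exact I.mul_mem_left _ _ ha } with hJ
  have hJmul : ∀ a ∈ J, ∀ e : A, a * e ∈ J := by
    intro a ha e
    show (a * e) ⊗ₜ[k] (1 : C) ∈ I
    rw [show (a * e) ⊗ₜ[k] (1 : C) = (a ⊗ₜ[k] (1 : C)) * (e ⊗ₜ[k] (1 : C)) by
      rw [Algebra.TensorProduct.tmul_mul_tmul, one_mul]]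
    exact I.mul_mem_right _ _ ha
  have hJne : J ≠ ⊥ := by
    intro hc
    have : a₀ ∈ J := by rw [hJ]; exact (hx'eq ▸ hx'I : a₀ ⊗ₜ[k] (1 : C) ∈ I)
    rw [hc, Submodule.mem_bot] at this
    exact ha₀ne this
  have hJtop := SN.submodule_eq_top J hJmul hJne
  have h1J : (1 : A) ∈ J := hJtop ▸ Submodule.mem_top
  have h11 : (1 : A ⊗[k] C) ∈ I := h1J
  rw [eq_top_iff]
  intro z _
  simpa using I.mul_mem_left z 1 h11

lemma SN.op_simple {B : Type*} [Ring B] [IsSimpleRing B] : IsSimpleRing Bᵐᵒᵖ := by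
  haveI : Nontrivial Bᵐᵒᵖ := inferInstance
  apply IsSimpleRing.of_eq_bot_or_eq_top
  intro I
  set J : TwoSidedIdeal B := TwoSidedIdeal.mk' {x : B | MulOpposite.op x ∈ I}
    (by simp only [Set.mem_setOf_eq, MulOpposite.op_zero]; exact I.zero_mem)
    (fun {a b} ha hb => by simpa using I.add_mem ha hb)
    (fun {a} ha => by simpa using I.neg_mem ha)
    (fun {a b} hb => by
      simp only [Set.mem_setOf_eq, MulOpposite.op_mul]
      exact I.mul_mem_right _ _ hb)
    (fun {a b} ha => by
      simp only [Set.mem_setOf_eq, MulOpposite.op_mul]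
      exact I.mul_mem_left _ _ ha) with hJ
  have hmem : ∀ x : B, x ∈ J ↔ MulOpposite.op x ∈ I := fun x =>
    TwoSidedIdeal.mem_mk' _ _ _ _ _ _ x
  rcases IsSimpleRing.simple.eq_bot_or_eq_top J with h | h
  · left
    ext x
    rw [TwoSidedIdeal.mem_bot]
    constructor
    · intro hx
      have : x.unop ∈ J := (hmem _).mpr (by simpa using hx)
      rw [h, TwoSidedIdeal.mem_bot] at this
      simpa using congrArg MulOpposite.op this
    · rintro rfl; exact I.zero_mem
  · right
    ext x
    simp only [TwoSidedIdeal.mem_top, iff_true]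
    have : x.unop ∈ J := h ▸ TwoSidedIdeal.mem_top B
    simpa using (hmem _).mp this

lemma SN.op_central {k B : Type*} [CommSemiring k] [Ring B] [Algebra k B]
    [Algebra.IsCentral k B] : Algebra.IsCentral k Bᵐᵒᵖ := by
  constructor
  intro x hx
  rw [Subalgebra.mem_center_iff] at hx
  have hc : x.unop ∈ Subalgebra.center k B := by
    rw [Subalgebra.mem_center_iff]
    intro b
    have := hx (MulOpposite.op b)
    have h1 := congrArg MulOpposite.unop this
    simpa using h1.symm
  have := Algebra.IsCentral.out (K := k) (D := B) hc
  rw [Algebra.mem_bot] at this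
  obtain ⟨lam, hlam⟩ := this
  rw [Algebra.mem_bot]
  exact ⟨lam, by rw [MulOpposite.algebraMap_apply, hlam, MulOpposite.op_unop]⟩

section setup
variable {k : Type*} [Field k] {A B : Type*} [Ring A] [Algebra k A] [Ring B] [Algebra k B]

/-- Right multiplication as an algebra hom from the opposite algebra to endomorphisms. -/
noncomputable def SN.rmul : Bᵐᵒᵖ →ₐ[k] Module.End k B where
  toFun x := LinearMap.mulRight k x.unop
  map_one' := by ext y; simp
  map_mul' x y := by ext z; simp [mul_assoc]
  map_zero' := by ext y; simp
  map_add' x y := by ext z; simp [mul_add]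
  commutes' c := by
    ext y
    simp only [LinearMap.mulRight_apply, Module.algebraMap_end_apply,
      MulOpposite.algebraMap_apply, MulOpposite.unop_op]
    rw [← Algebra.commutes c y, ← Algebra.smul_def]

/-- The `A ⊗ Bᵐᵒᵖ`-module structure on `B` induced by `f`. -/
noncomputable def SN.psi (f : A →ₐ[k] B) : (A ⊗[k] Bᵐᵒᵖ) →ₐ[k] Module.End k B :=
  Algebra.TensorProduct.lift ((Algebra.lmul k B).comp f) SN.rmul
    (fun a x => by
      ext y
      simp only [Module.End.mul_apply, AlgHom.comp_apply, Algebra.coe_lmul_eq_mul,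
        LinearMap.mul_apply', SN.rmul, AlgHom.coe_mk, RingHom.coe_mk, MonoidHom.coe_mk,
        OneHom.coe_mk, LinearMap.mulRight_apply]
      rw [mul_assoc])

lemma SN.psi_tmul (f : A →ₐ[k] B) (a : A) (b : Bᵐᵒᵖ) (x : B) :
    SN.psi f (a ⊗ₜ[k] b) x = f a * x * b.unop := by
  simp only [SN.psi, Algebra.TensorProduct.lift_tmul, Module.End.mul_apply, AlgHom.comp_apply,
    Algebra.coe_lmul_eq_mul, LinearMap.mul_apply', SN.rmul, AlgHom.coe_mk, RingHom.coe_mk,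
    MonoidHom.coe_mk, OneHom.coe_mk, LinearMap.mulRight_apply]
  rw [mul_assoc]

/-- Type synonym: `B` as a module over `A ⊗[k] Bᵐᵒᵖ` via `f`. -/
def SN.Mod (_f : A →ₐ[k] B) : Type _ := B

noncomputable instance (f : A →ₐ[k] B) : AddCommGroup (SN.Mod f) :=
  inferInstanceAs (AddCommGroup B)

noncomputable instance (f : A →ₐ[k] B) : Module k (SN.Mod f) :=
  inferInstanceAs (Module k B)

noncomputable instance (f : A →ₐ[k] B) : Module (A ⊗[k] Bᵐᵒᵖ) (SN.Mod f) :=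
  Module.compHom B (SN.psi f).toRingHom

lemma SN.Mod.smul_def (f : A →ₐ[k] B) (r : A ⊗[k] Bᵐᵒᵖ) (x : SN.Mod f) :
    r • x = SN.psi f r (x : B) := rfl

noncomputable instance (f : A →ₐ[k] B) : IsScalarTower k (A ⊗[k] Bᵐᵒᵖ) (SN.Mod f) := by
  constructor
  intro c r x
  show SN.psi f (c • r) (x : B) = c • SN.psi f r (x : B)
  rw [map_smul]
  rfl

noncomputable instance (f : A →ₐ[k] B) [FiniteDimensional k B] :
    FiniteDimensional k (SN.Mod f) := inferInstanceAs (FiniteDimensional k B)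

end setup

def SN.Mod.mk {k : Type*} [Field k] {A B : Type*} [Ring A] [Algebra k A] [Ring B] [Algebra k B]
    (f : A →ₐ[k] B) : B → SN.Mod f := fun x => x

def SN.Mod.un {k : Type*} [Field k] {A B : Type*} [Ring A] [Algebra k A] [Ring B] [Algebra k B]
    (f : A →ₐ[k] B) : SN.Mod f → B := fun x => x

/-- **Skolem–Noether theorem.** For a simple finite-dimensional `k`-algebra `A` and a
central simple finite-dimensional `k`-algebra `B`, any two `k`-algebra homomorphisms
`f g : A →ₐ[k] B` are conjugate by a unit of `B`. -/
theorem skolem_noether (k : Type*) [Field k] (A B : Type*) [Ring A] [Algebra k A]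
    [IsSimpleRing A] [FiniteDimensional k A] [Ring B] [Algebra k B]
    [Algebra.IsCentral k B] [IsSimpleRing B] [FiniteDimensional k B]
    (f g : A →ₐ[k] B) :
    ∃ b : Bˣ, ∀ x : A, f x = (b : B) * g x * ((b⁻¹ : Bˣ) : B) := by
  haveI : IsSimpleRing Bᵐᵒᵖ := SN.op_simple
  haveI : Algebra.IsCentral k Bᵐᵒᵖ := SN.op_central
  haveI : IsSimpleRing (A ⊗[k] Bᵐᵒᵖ) := SN.tensor_simple k A Bᵐᵒᵖ
  have hrank : Module.finrank k (SN.Mod g) = Module.finrank k (SN.Mod f) := rfl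
  obtain ⟨e⟩ := SN.iso_of_finrank_eq k (A ⊗[k] Bᵐᵒᵖ) (SN.Mod g) (SN.Mod f) hrank
  set E : B → B := fun x => SN.Mod.un f (e (SN.Mod.mk g x)) with hE
  have key : ∀ (r : A ⊗[k] Bᵐᵒᵖ) (x : B), E (SN.psi g r x) = SN.psi f r (E x) := by
    intro r x
    exact congrArg (SN.Mod.un f) (e.map_smul r (SN.Mod.mk g x))
  have key' : ∀ (a : A) (bb x : B), E (g a * x * bb) = f a * E x * bb := by
    intro a bb x
    have h := key (a ⊗ₜ[k] MulOpposite.op bb) x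
    rw [SN.psi_tmul, SN.psi_tmul] at h
    simpa using h
  set c : B := E 1 with hc
  have hmul : ∀ x : B, E x = c * x := by
    intro x
    have := key' 1 x 1
    simpa using this
  obtain ⟨d, hd⟩ : ∃ d : B, c * d = 1 := by
    obtain ⟨y, hy⟩ := e.surjective (SN.Mod.mk f 1)
    refine ⟨SN.Mod.un g y, ?_⟩
    rw [← hmul (SN.Mod.un g y)]
    exact congrArg (SN.Mod.un f) hy
  have hinj : Function.Injective E := fun x y hxy => by
    have := e.injective (a₁ := SN.Mod.mk g x) (a₂ := SN.Mod.mk g y) hxy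
    exact this
  have hdc : d * c = 1 := by
    have : E (d * c) = E 1 := by
      rw [hmul (d * c), hmul 1, mul_one, ← mul_assoc, hd, one_mul]
    exact hinj this
  refine ⟨⟨c, d, hd, hdc⟩, fun a => ?_⟩
  have h1 : E (g a) = f a * c := by
    have := key' a 1 1
    simpa using this
  have h3 : f a * c = c * g a := by rw [← h1, hmul (g a)]
  show f a = c * g a * d
  rw [← h3, mul_assoc, hd, mul_one]
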